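/- Let M be a finite set of rectangles, each having width ≥ ε_large·N and height ≤ ε_small·N with ε_small ≤ ε_s, and suppose M can be packed in an N×N bin with total area a(M) ≤ (1/2 + ε_a)·N² for constants 0 < ε_a < 1/2 and ε_s > 0. Then a subset S ⊆ M with |S| ≥ (1 − 2ε_s − 2ε_a)·|M| can be packed into an N × (1−ε_s)·N bin. -/

import Mathlib

open Finset

/-- `x y` give the bottom-left corners of an axis-aligned, non-overlapping packing of the
rectangles indexed by `s` (with widths `w` and heights `h`) inside a `W × H` box. -/
def IsPacking {ι : Type*} (s : Finset ι) (w h : ι → ℝ) (W H : ℝ) (x y : ι → ℝ) : Prop :=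
  (∀ i ∈ s, 0 ≤ x i ∧ x i + w i ≤ W ∧ 0 ≤ y i ∧ y i + h i ≤ H) ∧
  (∀ i ∈ s, ∀ j ∈ s, i ≠ j →
    x i + w i ≤ x j ∨ x j + w j ≤ x i ∨ y i + h i ≤ y j ∨ y j + h j ≤ y i)

/-- The keep predicate for the band-removal argument: for `c ≤ W` we keep rectangles
that avoid the open horizontal band `(c, c + ε)` (and later shift the upper ones
down by `ε`); for `c > W` we keep rectangles lying entirely in the window
`[c - W, c]` (and shift everything down by `c - W`). -/
def keepP {ι : Type*} (W ε : ℝ) (y h : ι → ℝ) (c : ℝ) (i : ι) : Prop :=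
  if c ≤ W then (y i + h i ≤ c ∨ c + ε ≤ y i) else (c - W ≤ y i ∧ y i + h i ≤ c)

/-- Lattice counting: the number of grid points `j·δ` (for `j < Q`) below `b`
is at most `b/δ + 1`. -/
private lemma count_upper {Q : ℕ} {δ b : ℝ} (hδ : 0 < δ) (hb : 0 ≤ b) :
    (((Finset.range Q).filter (fun j : ℕ => (j : ℝ) * δ < b)).card : ℝ) ≤ b / δ + 1 := by
  classical
  have hsub : ((Finset.range Q).filter (fun j : ℕ => (j : ℝ) * δ < b)) ⊆
      Finset.range ⌈b / δ⌉₊ := by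
    intro j hj
    rw [Finset.mem_filter] at hj
    rw [Finset.mem_range, Nat.lt_ceil, lt_div_iff₀ hδ]
    exact hj.2
  have h1 : (((Finset.range Q).filter (fun j : ℕ => (j : ℝ) * δ < b)).card : ℕ) ≤ ⌈b / δ⌉₊ := by
    simpa using Finset.card_le_card hsub
  have h2 : ((⌈b / δ⌉₊ : ℕ) : ℝ) ≤ b / δ + 1 := (Nat.ceil_lt_add_one (by positivity)).le
  exact le_trans (by exact_mod_cast h1) h2

/-- Lattice counting: the number of grid points `j·δ` (for `j < Q`) lying in the open
interval `(a, b)` is at most `(b-a)/δ + 1`. -/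
private lemma count_ivl {Q : ℕ} {δ : ℝ} (a b : ℝ) (hδ : 0 < δ) (hab : 0 ≤ b - a) :
    (((Finset.range Q).filter (fun j : ℕ => a < (j : ℝ) * δ ∧ (j : ℝ) * δ < b)).card : ℝ)
      ≤ (b - a) / δ + 1 := by
  classical
  set s := (Finset.range Q).filter (fun j : ℕ => a < (j : ℝ) * δ ∧ (j : ℝ) * δ < b) with hs
  rcases s.eq_empty_or_nonempty with he | hne
  · rw [he]
    simp only [Finset.card_empty, Nat.cast_zero]
    positivity
  · have hpq : s.min' hne ≤ s.max' hne := Finset.min'_le s _ (s.max'_mem hne)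
    have hsub : s ⊆ Finset.Icc (s.min' hne) (s.max' hne) := fun t ht =>
      Finset.mem_Icc.2 ⟨Finset.min'_le s t ht, Finset.le_max' s t ht⟩
    have hp := Finset.mem_filter.1 (s.min'_mem hne)
    have hq := Finset.mem_filter.1 (s.max'_mem hne)
    have h1 : a < (s.min' hne : ℝ) * δ := hp.2.1
    have h2 : (s.max' hne : ℝ) * δ < b := hq.2.2
    have hcard : s.card ≤ s.max' hne + 1 - s.min' hne := by
      simpa [Nat.card_Icc] using Finset.card_le_card hsub
    have hcast : (s.card : ℝ) ≤ (s.max' hne : ℝ) + 1 - (s.min' hne : ℝ) := by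
      have hle : s.min' hne ≤ s.max' hne + 1 := le_trans hpq (Nat.le_succ _)
      have : ((s.max' hne + 1 - s.min' hne : ℕ) : ℝ)
          = (s.max' hne : ℝ) + 1 - (s.min' hne : ℝ) := by
        rw [Nat.cast_sub hle]
        push_cast
        ring
      calc (s.card : ℝ) ≤ ((s.max' hne + 1 - s.min' hne : ℕ) : ℝ) := by exact_mod_cast hcard
        _ = _ := this
    have hdiff : (s.max' hne : ℝ) - (s.min' hne : ℝ) ≤ (b - a) / δ := by
      rw [le_div_iff₀ hδ]
      nlinarith
    linarith

set_option maxHeartbeats 1000000 in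
theorem steinberg_selection {ι : Type*} [DecidableEq ι] (M : Finset ι) (w h : ι → ℝ)
    (N εlarge εsmall εs εa : ℝ)
    (hN : 0 < N) (hεl : 0 < εlarge) (hεsm : 0 < εsmall) (hεsm_le : εsmall ≤ εs)
    (hεa0 : 0 < εa) (hεa1 : εa < 1 / 2)
    (hw : ∀ i ∈ M, εlarge * N ≤ w i)
    (hh : ∀ i ∈ M, 0 < h i ∧ h i ≤ εsmall * N)
    (hpack : ∃ x y, IsPacking M w h N N x y)
    (harea : ∑ i ∈ M, w i * h i ≤ (1 / 2 + εa) * N ^ 2) :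
    ∃ S ⊆ M, (1 - 2 * εs - 2 * εa) * (M.card : ℝ) ≤ (S.card : ℝ) ∧
      ∃ x y, IsPacking S w h N ((1 - εs) * N) x y := by
  classical
  obtain ⟨x, y, hin, hsep⟩ := hpack
  have hεs : (0 : ℝ) < εs := lt_of_lt_of_le hεsm hεsm_le
  set ε : ℝ := εs * N with hεdef
  have hε : 0 < ε := mul_pos hεs hN
  set W : ℝ := (1 - εs) * N with hWdef
  have hNW : N - ε = W := by rw [hεdef, hWdef]; ring
  set Q : ℕ := ⌈(3 : ℝ) / εa⌉₊ with hQdef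
  have hQ0 : 0 < Q := Nat.ceil_pos.2 (by positivity)
  have hQR : (3 : ℝ) / εa ≤ (Q : ℝ) := Nat.le_ceil _
  have hQRpos : (0 : ℝ) < (Q : ℝ) := by exact_mod_cast hQ0
  set δ : ℝ := N / Q with hδdef
  have hδ : 0 < δ := div_pos hN hQRpos
  have hQδ : (Q : ℝ) * δ = N := by
    rw [hδdef]
    field_simp
  have hεδ : ε / δ = εs * Q := by
    rw [hεdef, hδdef]
    field_simp
  -- Per-item counting: each item is removed for at most 2·εs·Q + 3 grid points.
  have key : ∀ i ∈ M,
      ((((Finset.range Q).filter (fun j : ℕ => ¬ keepP W ε y h ((j : ℝ) * δ) i)).card : ℝ))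
        ≤ 2 * εs * Q + 3 := by
    intro i hi
    have hy0 : 0 ≤ y i := (hin i hi).2.2.1
    have hyN : y i + h i ≤ N := (hin i hi).2.2.2
    have hh0 : 0 < h i := (hh i hi).1
    have hhε : h i ≤ ε := by
      rw [hεdef]
      have := (hh i hi).2
      nlinarith
    have hjN : ∀ j ∈ Finset.range Q, (j : ℝ) * δ < N := by
      intro j hj
      rw [Finset.mem_range] at hj
      have hjQ : (j : ℝ) < Q := by exact_mod_cast hj
      calc (j : ℝ) * δ < (Q : ℝ) * δ := by nlinarith
        _ = N := hQδ
    have hstep : ∀ j ∈ Finset.range Q, ¬ keepP W ε y h ((j : ℝ) * δ) i →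
        ((y i - ε < (j : ℝ) * δ ∧ (j : ℝ) * δ < y i + h i) ∨ (y i + W < (j : ℝ) * δ)) := by
      intro j _ hk
      by_cases hc : (j : ℝ) * δ ≤ W
      · rw [keepP, if_pos hc] at hk
        push_neg at hk
        exact Or.inl ⟨by linarith [hk.2], hk.1⟩
      · rw [keepP, if_neg hc] at hk
        push_neg at hk
        by_cases hcw : (j : ℝ) * δ - W ≤ y i
        · refine Or.inl ⟨?_, hk hcw⟩
          have hyleN : y i ≤ N := by linarith
          have : y i - ε ≤ W := by linarith
          linarith [not_le.1 hc]
        · exact Or.inr (by linarith [not_le.1 hcw])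
    have hsub : (Finset.range Q).filter (fun j : ℕ => ¬ keepP W ε y h ((j : ℝ) * δ) i) ⊆
        ((Finset.range Q).filter
            (fun j : ℕ => y i - ε < (j : ℝ) * δ ∧ (j : ℝ) * δ < y i + h i)) ∪
          ((Finset.range Q).filter
            (fun j : ℕ => y i + W < (j : ℝ) * δ ∧ (j : ℝ) * δ < N)) := by
      intro j hj
      rw [Finset.mem_filter] at hj
      rcases hstep j hj.1 hj.2 with h1 | h2
      · exact Finset.mem_union_left _ (Finset.mem_filter.2 ⟨hj.1, h1⟩)
      · exact Finset.mem_union_right _ (Finset.mem_filter.2 ⟨hj.1, h2, hjN j hj.1⟩)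
    have hcards : ((((Finset.range Q).filter
          (fun j : ℕ => ¬ keepP W ε y h ((j : ℝ) * δ) i)).card : ℝ))
        ≤ (((Finset.range Q).filter
            (fun j : ℕ => y i - ε < (j : ℝ) * δ ∧ (j : ℝ) * δ < y i + h i)).card : ℝ)
          + (((Finset.range Q).filter
            (fun j : ℕ => y i + W < (j : ℝ) * δ ∧ (j : ℝ) * δ < N)).card : ℝ) := by
      have := le_trans (Finset.card_le_card hsub) (Finset.card_union_le _ _)
      exact_mod_cast this
    by_cases hyε : ε ≤ y i
    · -- upper-tail piece is empty
      have hBad2 : ((Finset.range Q).filter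
          (fun j : ℕ => y i + W < (j : ℝ) * δ ∧ (j : ℝ) * δ < N)) = ∅ := by
        rw [Finset.filter_eq_empty_iff]
        intro j hj
        have hNle : N ≤ y i + W := by linarith
        rw [not_and]
        intro hgt
        linarith [hjN j hj]
      have h1 : (((Finset.range Q).filter
          (fun j : ℕ => y i - ε < (j : ℝ) * δ ∧ (j : ℝ) * δ < y i + h i)).card : ℝ)
          ≤ (h i + ε) / δ + 1 := by
        have := count_ivl (Q := Q) (y i - ε) (y i + h i) hδ (by linarith)
        rw [show y i + h i - (y i - ε) = h i + ε by ring] at this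
        exact this
      have h2 : (h i + ε) / δ ≤ 2 * εs * Q := by
        have hd : (h i + ε) / δ ≤ (2 * ε) / δ := by
          gcongr
          linarith
        calc (h i + ε) / δ ≤ (2 * ε) / δ := hd
          _ = 2 * (ε / δ) := by ring
          _ = 2 * (εs * Q) := by rw [hεδ]
          _ = 2 * εs * Q := by ring
      rw [hBad2] at hcards
      simp only [Finset.card_empty, Nat.cast_zero, add_zero] at hcards
      linarith
    · -- y i < ε : truncated pieces
      push_neg at hyε
      have h1 : (((Finset.range Q).filter
          (fun j : ℕ => y i - ε < (j : ℝ) * δ ∧ (j : ℝ) * δ < y i + h i)).card : ℝ)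
          ≤ (y i + h i) / δ + 1 := by
        have hsub1 : ((Finset.range Q).filter
            (fun j : ℕ => y i - ε < (j : ℝ) * δ ∧ (j : ℝ) * δ < y i + h i)) ⊆
            ((Finset.range Q).filter (fun j : ℕ => (j : ℝ) * δ < y i + h i)) := by
          intro j hj
          rw [Finset.mem_filter] at hj ⊢
          exact ⟨hj.1, hj.2.2⟩
        have hc := Finset.card_le_card hsub1
        have hcu := count_upper (Q := Q) (b := y i + h i) hδ (by linarith)
        calc (((Finset.range Q).filter
            (fun j : ℕ => y i - ε < (j : ℝ) * δ ∧ (j : ℝ) * δ < y i + h i)).card : ℝ)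
            ≤ (((Finset.range Q).filter (fun j : ℕ => (j : ℝ) * δ < y i + h i)).card : ℝ) := by
              exact_mod_cast hc
          _ ≤ (y i + h i) / δ + 1 := hcu
      have h2 : (((Finset.range Q).filter
          (fun j : ℕ => y i + W < (j : ℝ) * δ ∧ (j : ℝ) * δ < N)).card : ℝ)
          ≤ (ε - y i) / δ + 1 := by
        have := count_ivl (Q := Q) (y i + W) N hδ (by linarith)
        rw [show N - (y i + W) = ε - y i by linarith] at this
        exact this
      have h3 : (y i + h i) / δ + (ε - y i) / δ ≤ 2 * εs * Q := by
        have : (y i + h i) / δ + (ε - y i) / δ = (h i + ε) / δ := by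
          rw [← add_div]
          ring_nf
        rw [this]
        have hd : (h i + ε) / δ ≤ (2 * ε) / δ := by
          gcongr
          linarith
        calc (h i + ε) / δ ≤ (2 * ε) / δ := hd
          _ = 2 * (ε / δ) := by ring
          _ = 2 * (εs * Q) := by rw [hεδ]
          _ = 2 * εs * Q := by ring
      linarith
  -- Double counting + pigeonhole: some grid point removes few rectangles.
  have hdouble : ∑ j ∈ Finset.range Q, (M.filter (fun i => ¬ keepP W ε y h ((j : ℝ) * δ) i)).card
      = ∑ i ∈ M, ((Finset.range Q).filter (fun j : ℕ => ¬ keepP W ε y h ((j : ℝ) * δ) i)).card := by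
    simp only [Finset.card_filter]
    exact Finset.sum_comm
  have hex : ∃ j ∈ Finset.range Q,
      ((M.filter (fun i => ¬ keepP W ε y h ((j : ℝ) * δ) i)).card : ℝ)
        ≤ 2 * εs * (M.card : ℝ) + 3 * (M.card : ℝ) / Q := by
    by_contra hcon
    push_neg at hcon
    have hne : (Finset.range Q).Nonempty := Finset.nonempty_range_iff.2 hQ0.ne'
    have hsum1 : ∑ _j ∈ Finset.range Q, (2 * εs * (M.card : ℝ) + 3 * (M.card : ℝ) / Q)
        < ∑ j ∈ Finset.range Q,
            ((M.filter (fun i => ¬ keepP W ε y h ((j : ℝ) * δ) i)).card : ℝ) :=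
      Finset.sum_lt_sum_of_nonempty hne (fun j hj => hcon j hj)
    have hsum2 : ∑ j ∈ Finset.range Q,
        ((M.filter (fun i => ¬ keepP W ε y h ((j : ℝ) * δ) i)).card : ℝ)
        ≤ (M.card : ℝ) * (2 * εs * Q + 3) := by
      calc ∑ j ∈ Finset.range Q,
            ((M.filter (fun i => ¬ keepP W ε y h ((j : ℝ) * δ) i)).card : ℝ)
          = ((∑ j ∈ Finset.range Q,
              (M.filter (fun i => ¬ keepP W ε y h ((j : ℝ) * δ) i)).card : ℕ) : ℝ) := by
            push_cast
            rfl
        _ = ((∑ i ∈ M,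
              ((Finset.range Q).filter (fun j : ℕ => ¬ keepP W ε y h ((j : ℝ) * δ) i)).card : ℕ) : ℝ) := by
            rw [hdouble]
        _ = ∑ i ∈ M,
              (((Finset.range Q).filter (fun j : ℕ => ¬ keepP W ε y h ((j : ℝ) * δ) i)).card : ℝ) := by
            push_cast
            rfl
        _ ≤ ∑ _i ∈ M, (2 * εs * Q + 3) := Finset.sum_le_sum key
        _ = (M.card : ℝ) * (2 * εs * Q + 3) := by
            rw [Finset.sum_const, nsmul_eq_mul]
    have hconst : ∑ _j ∈ Finset.range Q, (2 * εs * (M.card : ℝ) + 3 * (M.card : ℝ) / Q)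
        = (Q : ℝ) * (2 * εs * (M.card : ℝ) + 3 * (M.card : ℝ) / Q) := by
      rw [Finset.sum_const, Finset.card_range, nsmul_eq_mul]
    have heq : (Q : ℝ) * (2 * εs * (M.card : ℝ) + 3 * (M.card : ℝ) / Q)
        = (M.card : ℝ) * (2 * εs * Q + 3) := by
      field_simp
    rw [hconst, heq] at hsum1
    linarith
  obtain ⟨j₀, _hj₀Q, hj₀⟩ := hex
  set c : ℝ := (j₀ : ℝ) * δ with hcdef
  have hc0 : 0 ≤ c := by positivity
  refine ⟨M.filter (keepP W ε y h c), Finset.filter_subset _ _, ?_, ?_⟩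
  · -- cardinality bound
    have hpart : (M.filter (keepP W ε y h c)).card
        + (M.filter (fun i => ¬ keepP W ε y h c i)).card = M.card :=
      Finset.card_filter_add_card_filter_not _
    have hcast : ((M.filter (keepP W ε y h c)).card : ℝ)
        + ((M.filter (fun i => ¬ keepP W ε y h c i)).card : ℝ) = (M.card : ℝ) := by
      exact_mod_cast hpart
    have h3Q : 3 * (M.card : ℝ) / Q ≤ 2 * εa * (M.card : ℝ) := by
      have h3 : (3 : ℝ) ≤ εa * Q := by
        rw [div_le_iff₀ hεa0] at hQR
        linarith
      rw [div_le_iff₀ hQRpos]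
      have hm0 : (0 : ℝ) ≤ (M.card : ℝ) := Nat.cast_nonneg _
      nlinarith
    have hRem : ((M.filter (fun i => ¬ keepP W ε y h c i)).card : ℝ)
        ≤ (2 * εs + 2 * εa) * (M.card : ℝ) := by
      calc ((M.filter (fun i => ¬ keepP W ε y h c i)).card : ℝ)
          ≤ 2 * εs * (M.card : ℝ) + 3 * (M.card : ℝ) / Q := hj₀
        _ ≤ 2 * εs * (M.card : ℝ) + 2 * εa * (M.card : ℝ) := by linarith
        _ = (2 * εs + 2 * εa) * (M.card : ℝ) := by ring
    have hgoal : (1 - 2 * εs - 2 * εa) * (M.card : ℝ)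
        = (M.card : ℝ) - (2 * εs + 2 * εa) * (M.card : ℝ) := by ring
    rw [hgoal]
    linarith
  · -- packing construction
    by_cases hcW : c ≤ W
    · -- band removal at height c, shift upper part down by ε
      refine ⟨x, fun i => if y i + h i ≤ c then y i else y i - ε, ?_, ?_⟩
      · intro i hiS
        have hiM : i ∈ M := Finset.filter_subset _ _ hiS
        have hKi : keepP W ε y h c i := (Finset.mem_filter.1 hiS).2
        rw [keepP, if_pos hcW] at hKi
        obtain ⟨hx0, hxw, hy0, hyh⟩ := hin i hiM
        refine ⟨hx0, hxw, ?_, ?_⟩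
        · dsimp only
          split_ifs with hif
          · exact hy0
          · have := hKi.resolve_left hif
            linarith
        · dsimp only
          split_ifs with hif
          · calc y i + h i ≤ c := hif
              _ ≤ W := hcW
          · have := hKi.resolve_left hif
            linarith
      · intro i hiS k hkS hik
        have hiM : i ∈ M := Finset.filter_subset _ _ hiS
        have hkM : k ∈ M := Finset.filter_subset _ _ hkS
        have hKi : keepP W ε y h c i := (Finset.mem_filter.1 hiS).2
        rw [keepP, if_pos hcW] at hKi
        have hKk : keepP W ε y h c k := (Finset.mem_filter.1 hkS).2
        rw [keepP, if_pos hcW] at hKk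
        have mono : ∀ a b : ι, (y a + h a ≤ c ∨ c + ε ≤ y a) → (y b + h b ≤ c ∨ c + ε ≤ y b) →
            y a + h a ≤ y b →
            (if y a + h a ≤ c then y a else y a - ε) + h a
              ≤ (if y b + h b ≤ c then y b else y b - ε) := by
          intro a b Ka Kb hab
          by_cases h1 : y a + h a ≤ c
          · by_cases h2 : y b + h b ≤ c
            · rw [if_pos h1, if_pos h2]
              exact hab
            · rw [if_pos h1, if_neg h2]
              have := Kb.resolve_left h2
              linarith
          · by_cases h2 : y b + h b ≤ c
            · rw [if_neg h1, if_pos h2]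
              linarith
            · rw [if_neg h1, if_neg h2]
              linarith
        rcases hsep i hiM k hkM hik with h1 | h2 | h3 | h4
        · exact Or.inl h1
        · exact Or.inr (Or.inl h2)
        · exact Or.inr (Or.inr (Or.inl (mono i k hKi hKk h3)))
        · exact Or.inr (Or.inr (Or.inr (mono k i hKk hKi h4)))
    · -- window [c - W, c], shift down by c - W
      refine ⟨x, fun i => y i - (c - W), ?_, ?_⟩
      · intro i hiS
        have hiM : i ∈ M := Finset.filter_subset _ _ hiS
        have hKi : keepP W ε y h c i := (Finset.mem_filter.1 hiS).2
        rw [keepP, if_neg hcW] at hKi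
        obtain ⟨hx0, hxw, hy0, hyh⟩ := hin i hiM
        refine ⟨hx0, hxw, ?_, ?_⟩
        · dsimp only
          linarith [hKi.1]
        · dsimp only
          linarith [hKi.2]
      · intro i hiS k hkS hik
        rcases hsep i (Finset.filter_subset _ _ hiS) k (Finset.filter_subset _ _ hkS) hik with
          h1 | h2 | h3 | h4
        · exact Or.inl h1
        · exact Or.inr (Or.inl h2)
        · exact Or.inr (Or.inr (Or.inl (by dsimp only; linarith)))
        · exact Or.inr (Or.inr (Or.inr (by dsimp only; linarith)))
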